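/- Let e be a positive integer and let (x, y, z, w) be a solution in positive integers of (4^e−1)^x + 4^{e·y} + (4^e+1)^z = (4^e+2)^w with w ≥ 2e + 1. If w ≥ 4e, then x + z ≡ 0 (mod 4^e); and if w < 4e and (e, w) ≠ (1, 3), then x + z = 2^{w−2e}. -/

import Mathlib

lemma eight_le (e : ℕ) (h : 2 ≤ e) : 8 * e ≤ 4 ^ e := by
  induction e with
  | zero => omega
  | succ n ih =>
    rcases Nat.lt_or_ge n 2 with h2 | h2
    · interval_cases n <;> simp_all
    · have h1 := ih (by omega)
      have h3 : 4 ^ n ≥ 8 := by calc 8 ≤ 8 * n := by omega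
                                  _ ≤ 4 ^ n := h1
      calc 8 * (n+1) = 8*n + 8 := by ring
        _ ≤ 4^n + 4^n := by omega
        _ ≤ 4 ^ (n+1) := by rw [pow_succ]; omega

lemma add_one_pow_modeq (a : ℤ) : ∀ n : ℕ, (a + 1) ^ n ≡ n * a + 1 [ZMOD a ^ 2] := by
  intro n
  induction n with
  | zero => simp
  | succ n ih =>
    calc (a + 1) ^ (n + 1) = (a + 1) ^ n * (a + 1) := by ring
    _ ≡ (n * a + 1) * (a + 1) [ZMOD a ^ 2] := ih.mul_right _
    _ ≡ (↑(n + 1) : ℤ) * a + 1 [ZMOD a ^ 2] := by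
        apply Int.modEq_iff_dvd.mpr
        refine ⟨-n, by push_cast; ring⟩

lemma sub_one_pow_modeq (a : ℤ) : ∀ k : ℕ, (a - 1) ^ (2 * k + 1) ≡ (2 * k + 1) * a - 1 [ZMOD a ^ 2] := by
  intro k
  induction k with
  | zero => simp
  | succ k ih =>
    calc (a - 1) ^ (2 * (k + 1) + 1) = (a - 1) ^ (2 * k + 1) * (a - 1) ^ 2 := by ring
    _ ≡ ((2 * k + 1) * a - 1) * (a - 1) ^ 2 [ZMOD a ^ 2] := ih.mul_right _
    _ ≡ (↑(2 * (k + 1) + 1) : ℤ) * a - 1 [ZMOD a ^ 2] := by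
        apply Int.modEq_iff_dvd.mpr
        exact ⟨-(2*k+1)*a + (4*k+3), by push_cast; ring⟩


theorem x_plus_z_dichotomy (e x y z w : ℕ) (he : 0 < e)
    (hx : 0 < x) (hy : 0 < y) (hz : 0 < z) (hw : 0 < w)
    (heq : (4 ^ e - 1) ^ x + 4 ^ (e * y) + (4 ^ e + 1) ^ z = (4 ^ e + 2) ^ w)
    (hwe : 2 * e + 1 ≤ w) :
    (4 * e ≤ w → x + z ≡ 0 [MOD 4 ^ e]) ∧
    (w < 4 * e → (e, w) ≠ (1, 3) → x + z = 2 ^ (w - 2 * e)) := by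
  have h4e : (1:ℕ) ≤ 4 ^ e := Nat.one_le_pow _ _ (by norm_num)
  have heqZ : ((4:ℤ) ^ e - 1) ^ x + 4 ^ (e * y) + ((4:ℤ) ^ e + 1) ^ z = ((4:ℤ) ^ e + 2) ^ w := by
    have := congrArg (Nat.cast : ℕ → ℤ) heq
    push_cast [Nat.cast_sub h4e] at this
    convert this using 3 <;> push_cast <;> ring
  -- x odd
  have hxodd : Odd x := by
    by_contra hcon
    rw [Nat.not_odd_iff_even] at hcon
    obtain ⟨k, hk⟩ := hcon
    have h4 := congrArg (Int.cast : ℤ → ZMod 4) heqZ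
    push_cast at h4
    rw [show ((4:ZMod 4)) = 0 by decide] at h4
    rw [zero_pow (by omega : e ≠ 0), zero_pow (by positivity : e*y ≠ 0)] at h4
    rw [hk, show k + k = 2*k by ring, pow_mul] at h4
    norm_num at h4
    rw [show w = 2 + (w - 2) by omega, pow_add, show ((2:ZMod 4))^2 = 0 by decide, zero_mul] at h4
    exact absurd h4 (by decide)
  have hzodd : Odd z := by
    by_contra hcon
    rw [Nat.not_odd_iff_even] at hcon
    obtain ⟨k, hk⟩ := hcon
    have h3 := congrArg (Int.cast : ℤ → ZMod 3) heqZ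
    push_cast at h3
    rw [show ((4:ZMod 3)) = 1 by decide] at h3
    rw [hk, show k + k = 2*k by ring, pow_mul] at h3
    norm_num at h3
    rw [zero_pow (by omega : x ≠ 0)] at h3
    rw [pow_mul, show ((2:ZMod 3))^2 = 1 by decide, one_pow, show ((3:ZMod 3)) = 0 by decide,
      zero_pow (by omega : w ≠ 0)] at h3
    exact absurd h3 (by decide)
  -- main modular facts, modulus N = 2^(4e)
  set N : ℤ := 2 ^ (4 * e) with hN
  have hA2 : ((4:ℤ) ^ e) ^ 2 = N := by
    rw [hN, show (4:ℤ) = 2^2 by norm_num, ← pow_mul, ← pow_mul]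
    ring_nf
  have h1 : ((4:ℤ) ^ e - 1) ^ x ≡ (x : ℤ) * 4 ^ e - 1 [ZMOD N] := by
    obtain ⟨k, hk⟩ := hxodd
    have := sub_one_pow_modeq ((4:ℤ)^e) k
    rw [hA2] at this
    rw [hk]
    convert this using 2 <;> push_cast <;> ring
  have h2 : ((4:ℤ) ^ e + 1) ^ z ≡ (z : ℤ) * 4 ^ e + 1 [ZMOD N] := by
    have := add_one_pow_modeq ((4:ℤ)^e) z
    rwa [hA2] at this
  have h3 : ((4:ℤ) ^ e + 2) ^ w ≡ 2 ^ w [ZMOD N] := by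
    set m : ℕ := 2 * e - 1 with hm
    have hm1 : 2 * e = m + 1 := by omega
    have hbase : (4:ℤ) ^ e + 2 = 2 * (2 ^ m + 1) := by
      rw [show (4:ℤ) = 2^2 by norm_num, ← pow_mul, hm1, pow_succ]; ring
    have hmod : ((2:ℤ) ^ m + 1) ^ w ≡ (w : ℤ) * 2 ^ m + 1 [ZMOD 2 ^ (2 * m)] := by
      have := add_one_pow_modeq ((2:ℤ)^m) w
      rwa [← pow_mul, mul_comm m 2] at this
    have hmul : (2:ℤ) ^ w * (2 ^ m + 1) ^ w ≡ 2 ^ w * ((w : ℤ) * 2 ^ m + 1)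
        [ZMOD 2 ^ w * 2 ^ (2 * m)] := hmod.mul_left' 
    have hdvdN : N ∣ (2:ℤ) ^ w * 2 ^ (2 * m) := by
      rw [hN, ← pow_add]
      exact pow_dvd_pow 2 (by omega)
    have hstep1 : ((4:ℤ) ^ e + 2) ^ w ≡ 2 ^ w * ((w : ℤ) * 2 ^ m + 1) [ZMOD N] := by
      rw [hbase, mul_pow]
      exact (hmul).of_dvd hdvdN
    refine hstep1.trans ?_
    apply Int.modEq_iff_dvd.mpr
    have : (2:ℤ) ^ w - 2 ^ w * ((w : ℤ) * 2 ^ m + 1) = -((w:ℤ) * 2 ^ (w + m)) := by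
      rw [pow_add]; ring
    rw [this, dvd_neg, hN]
    exact Dvd.dvd.mul_left (pow_dvd_pow 2 (by omega)) _
  have key : ((x : ℤ) + z) * 4 ^ e + 4 ^ (e * y) ≡ 2 ^ w [ZMOD N] := by
    have hsum : ((x : ℤ) * 4 ^ e - 1) + 4 ^ (e * y) + ((z : ℤ) * 4 ^ e + 1) ≡ 2 ^ w [ZMOD N] :=
      (((h1.add_right _).add h2).symm).trans (heqZ ▸ h3)
    have : ((x : ℤ) + z) * 4 ^ e + 4 ^ (e * y)
        = ((x : ℤ) * 4 ^ e - 1) + 4 ^ (e * y) + ((z : ℤ) * 4 ^ e + 1) := by ring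
    rwa [this]
  -- y ≥ 2
  have hy2 : 2 ≤ y := by
    by_contra hcon
    have hy1 : y = 1 := by omega
    rw [hy1, mul_one] at key
    have key2 : ((x : ℤ) + z + 1) * 4 ^ e ≡ 2 ^ w [ZMOD N] := by
      have : ((x : ℤ) + z + 1) * 4 ^ e = ((x : ℤ) + z) * 4 ^ e + 4 ^ e := by ring
      rwa [this]
    have hd1 : (2:ℤ) ^ (2 * e + 1) ∣ N := pow_dvd_pow 2 (by omega)
    have hd2 : (2:ℤ) ^ (2 * e + 1) ∣ 2 ^ w := pow_dvd_pow 2 (by omega)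
    have := (key2.of_dvd hd1).dvd
    have hdvd : (2:ℤ) ^ (2 * e + 1) ∣ ((x : ℤ) + z + 1) * 4 ^ e := by
      have h' : ((x : ℤ) + z + 1) * 4 ^ e = (2 ^ w - (((x : ℤ) + z + 1) * 4 ^ e)) * (-1) + 2 ^ w := by ring
      rw [h']
      exact dvd_add (this.mul_right _) hd2
    rw [show (4:ℤ) = 2^2 by norm_num, ← pow_mul, pow_succ] at hdvd
    obtain ⟨c, hc⟩ := hdvd
    have h2e : (2:ℤ) ^ (2 * e) ≠ 0 := by positivity
    have hcc : ((x : ℤ) + z + 1) = 2 * c := by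
      rw [mul_comm, mul_assoc] at hc
      exact mul_left_cancel₀ h2e hc
    obtain ⟨a, ha⟩ := hxodd
    obtain ⟨b, hb⟩ := hzodd
    have hxz : (x : ℤ) = 2*a+1 := by rw [ha]; push_cast; ring
    have hzz : (z : ℤ) = 2*b+1 := by rw [hb]; push_cast; ring
    omega
  -- master congruence
  have master : ((x : ℤ) + z) * 2 ^ (2 * e) ≡ 2 ^ w [ZMOD N] := by
    have h0 : ((4:ℤ)) ^ (e * y) ≡ 0 [ZMOD N] := by
      apply Int.modEq_zero_iff_dvd.mpr
      rw [show (4:ℤ) = 2^2 by norm_num, ← pow_mul, hN]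
      exact pow_dvd_pow 2 (by nlinarith)
    have := (key.symm.trans ((Int.ModEq.refl _).add h0)).symm
    simp only [add_zero] at this
    rwa [show (4:ℤ)^e = 2^(2*e) by rw [show (4:ℤ) = 2^2 by norm_num, ← pow_mul]] at this
  constructor
  · -- Part 1 : w ≥ 4e
    intro hge
    have hdw : N ∣ (2:ℤ)^w := pow_dvd_pow 2 (by omega)
    have hmd := master.dvd
    have hdvd : N ∣ ((x:ℤ)+z) * 2^(2*e) := by
      have h' : ((x:ℤ)+z)*2^(2*e) = (2^w - ((x:ℤ)+z)*2^(2*e))*(-1) + 2^w := by ring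
      rw [h']; exact dvd_add (hmd.mul_right _) hdw
    rw [hN, show 4*e = 2*e + 2*e by ring, pow_add] at hdvd
    obtain ⟨c, hc⟩ := hdvd
    have hcc : ((x:ℤ)+z) = 2^(2*e)*c := by
      rw [mul_comm, mul_assoc] at hc
      exact mul_left_cancel₀ (by positivity : ((2:ℤ)^(2*e)) ≠ 0) hc
    have hdvdn : (4^e : ℕ) ∣ x + z := by
      have hz' : ((4^e:ℕ):ℤ) ∣ ((x+z:ℕ):ℤ) := by
        push_cast
        rw [show (4:ℤ) = 2^2 by norm_num, ← pow_mul]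
        exact ⟨c, hcc⟩
      exact_mod_cast hz'
    exact (Nat.modEq_zero_iff_dvd).mpr hdvdn
  · -- Part 2 : w < 4e
    intro hlt hne
    have he2 : 2 ≤ e := by
      rcases Nat.lt_or_ge e 2 with h | h
      · exfalso
        have he1 : e = 1 := by omega
        have hw3 : w = 3 := by omega
        exact hne (by rw [he1, hw3])
      · exact h
    -- size bounds
    have h4ge : 4 ≤ 4^e := by
      calc 4 = 4^1 := (pow_one 4).symm
        _ ≤ 4^e := Nat.pow_le_pow_right (by norm_num) he
    have hlt1 : (4^e - 1)^x < (4^e + 2)^w := by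
      have hp : 0 < 4^(e*y) + (4^e+1)^z := by positivity
      omega
    have hlt2 : (4^e + 1)^z < (4^e + 2)^w := by
      rw [← heq]
      have hp : 0 < (4^e - 1)^x := Nat.pow_pos (by omega)
      have hq : 0 < (4:ℕ)^(e*y) := by positivity
      omega
    have hchain : (4^e + 2)^w ≤ (4^e - 1)^(w+2) := by
      have s1 : (4^e + 2)^w ≤ (2*(4^e - 1))^w := Nat.pow_le_pow_left (by omega) w
      have s2 : (2*(4^e-1))^w = 2^w * (4^e-1)^w := mul_pow 2 _ w
      have s3 : (2:ℕ)^w ≤ 2^(4*e - 1) := Nat.pow_le_pow_right (by norm_num) (by omega)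
      have s4 : (2:ℕ)^(4*e-1) ≤ (4^e - 1)^2 := by
        have ht : (4^e:ℕ)^2 ≤ 2*(4^e - 1)^2 := by
          have hs3 : 3 ≤ 4^e - 1 := by omega
          have h4es : 4^e = (4^e - 1) + 1 := by omega
          nlinarith [sq_nonneg (4^e - 1 : ℕ)]
        have hp : ((4:ℕ)^e)^2 = 2^(4*e) := by
          rw [show (4:ℕ) = 2^2 by norm_num, ← pow_mul, ← pow_mul]; ring_nf
        have hq : (2:ℕ)^(4*e) = 2^(4*e-1)*2 := by rw [← pow_succ]; congr 1; omega
        have := hp ▸ ht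
        rw [hq] at this
        nlinarith
      calc (4^e+2)^w ≤ 2^w * (4^e-1)^w := by rw [← s2]; exact s1
        _ ≤ (4^e-1)^2 * (4^e-1)^w := Nat.mul_le_mul_right _ (le_trans s3 s4)
        _ = (4^e-1)^(w+2) := by rw [← pow_add]; ring_nf
    have hxb : x ≤ w + 1 := by
      by_contra hcon
      have : (4^e-1)^(w+2) ≤ (4^e-1)^x := Nat.pow_le_pow_right (by omega) (by omega)
      omega
    have hzb : z ≤ w + 1 := by
      by_contra hcon
      have c1 : (4^e - 1)^(w+2) ≤ (4^e+1)^(w+2) := Nat.pow_le_pow_left (by omega) _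
      have c2 : (4^e+1)^(w+2) ≤ (4^e+1)^z := Nat.pow_le_pow_right (by omega) (by omega)
      omega
    -- divisibility from master
    have hsplit : 2*e + (w - 2*e) = w := by omega
    have hmd := master.dvd
    have hfact : (2:ℤ)^w - ((x:ℤ)+z) * 2^(2*e) = 2^(2*e) * (2^(w-2*e) - ((x:ℤ)+z)) := by
      rw [show (2:ℤ)^w = 2^(2*e) * 2^(w-2*e) by rw [← pow_add, hsplit]]; ring
    rw [hfact, hN, show 4*e = 2*e + 2*e by ring, pow_add] at hmd
    have hdvd : (2:ℤ)^(2*e) ∣ (2^(w-2*e) - ((x:ℤ)+z)) := by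
      obtain ⟨c, hc⟩ := hmd
      rw [mul_assoc] at hc
      exact ⟨c, mul_left_cancel₀ (by positivity : ((2:ℤ)^(2*e)) ≠ 0) hc⟩
    -- bounds in ℤ
    have h8 : (8*e:ℤ) ≤ 2^(2*e) := by
      have := eight_le e he2
      have hcast : ((8*e:ℕ):ℤ) ≤ ((4^e:ℕ):ℤ) := by exact_mod_cast this
      push_cast at hcast
      rwa [show (4:ℤ) = 2^2 by norm_num, ← pow_mul] at hcast
    have hS : ((x:ℤ)+z) ≤ 8*e := by
      have : (x:ℤ) ≤ w + 1 := by exact_mod_cast hxb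
      have : (z:ℤ) ≤ w + 1 := by exact_mod_cast hzb
      have : (w:ℤ) < 4*e := by exact_mod_cast hlt
      omega
    have hSpos : (2:ℤ) ≤ (x:ℤ)+z := by
      have : (1:ℤ) ≤ (x:ℤ) := by exact_mod_cast hx
      have : (1:ℤ) ≤ (z:ℤ) := by exact_mod_cast hz
      omega
    have hple : (2:ℤ)^(w-2*e) ≤ 2^(2*e-1) := by
      apply pow_le_pow_right₀ (by norm_num)
      omega
    have hphalf : (2:ℤ)^(2*e-1) * 2 = 2^(2*e) := by rw [← pow_succ]; congr 1; omega
    have hp1 : (1:ℤ) ≤ 2^(2*e-1) := one_le_pow₀ (by norm_num)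
    have hp2 : (2:ℤ) ≤ 2^(w-2*e) := by
      calc (2:ℤ) = 2^1 := (pow_one 2).symm
        _ ≤ 2^(w-2*e) := pow_le_pow_right₀ (by norm_num) (by omega)
    have hzero : (2:ℤ)^(w-2*e) - ((x:ℤ)+z) = 0 := by
      apply Int.eq_zero_of_abs_lt_dvd hdvd
      rw [abs_lt]
      constructor <;> linarith
    have hfin : ((x:ℤ)+z) = 2^(w-2*e) := by omega
    have : ((x+z:ℕ):ℤ) = ((2^(w-2*e):ℕ):ℤ) := by push_cast; omega
    exact_mod_cast this
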